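/- Consider Thompson Sampling for the two-armed Bernoulli bandit with means μ₁ > μ₂, Δ = μ₁ − μ₂, run for T steps with L = 24(ln T)/Δ². For each t, let E₂(t) be the event that θ₂(t) ≤ μ₂ + Δ/2 or k₂(t) < L, where θ₂(t) ~ Beta(S₂(t)+1, F₂(t)+1) is the sample for arm 2 at time t and k₂(t) is the number of plays of arm 2 before time t. Then for all t, Pr(E₂(t)) ≥ 1 − 2/T². -/

import Mathlib

open MeasureTheory ProbabilityTheory Real

noncomputable def binPMF (n : ℕ) (p : ℝ) (s : ℕ) : ℝ :=
  (n.choose s : ℝ) * p ^ s * (1 - p) ^ (n - s)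

noncomputable def betaPDF (a b : ℕ) (x : ℝ) : ℝ :=
  if 0 < x ∧ x < 1 then
    (Real.Gamma (a + b) / (Real.Gamma a * Real.Gamma b)) * x ^ (a - 1) * (1 - x) ^ (b - 1)
  else 0

noncomputable def betaCDF (a b : ℕ) (y : ℝ) : ℝ :=
  ∫ x in Set.Iic y, betaPDF a b x

/-- A run of Thompson Sampling on an `N`-armed Bernoulli bandit with means `μ`,
over a probability space `(Ω, P)`.  Time steps are `t = 1, 2, …`; at each step the
algorithm samples `θ t i` for every arm `i` (distributed, given the history of plays
and rewards, independently as `Beta(Sᵢ+1, Fᵢ+1)` where `Sᵢ, Fᵢ` count the successes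
and failures of arm `i` so far), plays the arm `play t` with the largest sample, and
receives a Bernoulli(`μ i`) reward `r t`. -/
structure TSModel (N : ℕ) (μ : Fin N → ℝ) {Ω : Type*} [MeasurableSpace Ω]
    (P : Measure Ω) where
  /-- the Beta samples at each time step -/
  θ : ℕ → Fin N → Ω → ℝ
  /-- the arm played at each time step -/
  play : ℕ → Ω → Fin N
  /-- the (Bernoulli) reward received at each time step -/
  r : ℕ → Ω → Bool
  meas_θ : ∀ t i, Measurable (θ t i)
  meas_play : ∀ t, Measurable (play t)
  meas_r : ∀ t, Measurable (r t)
  /-- the played arm has the largest sampled value -/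
  argmax : ∀ t ω i, θ t i ω ≤ θ t (play t ω) ω
  /-- conditionally on the history `h` of (arm, reward) pairs at times `1,…,t−1`,
  the samples `θ t i` are independent across arms, with `θ t i` distributed as
  `Beta(Sᵢ(h)+1, Fᵢ(h)+1)`. -/
  beta_sample : ∀ (t : ℕ) (h : Fin (t - 1) → Fin N × Bool) (x : Fin N → ℝ),
    P ({ω | ∀ i, θ t i ω ≤ x i} ∩
        {ω | ∀ τ : Fin (t - 1), (play ((τ : ℕ) + 1) ω, r ((τ : ℕ) + 1) ω) = h τ}) =
      ENNReal.ofReal (∏ i,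
        betaCDF ((Finset.univ.filter fun τ : Fin (t - 1) => h τ = (i, true)).card + 1)
                ((Finset.univ.filter fun τ : Fin (t - 1) => h τ = (i, false)).card + 1)
                (x i)) *
      P {ω | ∀ τ : Fin (t - 1), (play ((τ : ℕ) + 1) ω, r ((τ : ℕ) + 1) ω) = h τ}
  /-- conditionally on the history, the samples, and the arm `i` played at time `t`,
  the reward at time `t` is Bernoulli(`μ i`). -/
  reward : ∀ (t : ℕ) (i : Fin N) (h : Fin (t - 1) → Fin N × Bool)
      (B : Set (Fin N → ℝ)), MeasurableSet B →
    P ({ω | r t ω = true} ∩ {ω | (fun i => θ t i ω) ∈ B} ∩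
        {ω | ∀ τ : Fin (t - 1), (play ((τ : ℕ) + 1) ω, r ((τ : ℕ) + 1) ω) = h τ} ∩
        {ω | play t ω = i}) =
      ENNReal.ofReal (μ i) *
      P ({ω | (fun i => θ t i ω) ∈ B} ∩
          {ω | ∀ τ : Fin (t - 1), (play ((τ : ℕ) + 1) ω, r ((τ : ℕ) + 1) ω) = h τ} ∩
          {ω | play t ω = i})

namespace TSModel

variable {N : ℕ} [NeZero N] {μ : Fin N → ℝ} {Ω : Type*} [MeasurableSpace Ω] {P : Measure Ω}

/-- `k i t`: the number of plays of arm `i` at times `1, …, t−1`. -/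
def k (M : TSModel N μ P) (i : Fin N) (t : ℕ) (ω : Ω) : ℕ :=
  ((Finset.Ico 1 t).filter fun τ => M.play τ ω = i).card

/-- `S i t`: the number of successes of arm `i` at times `1, …, t−1`. -/
def S (M : TSModel N μ P) (i : Fin N) (t : ℕ) (ω : Ω) : ℕ :=
  ((Finset.Ico 1 t).filter fun τ => M.play τ ω = i ∧ M.r τ ω = true).card

/-- `sj j`: the number of successes in the first `j` plays of the (optimal) arm `0`. -/
noncomputable def sj (M : TSModel N μ P) (j : ℕ) (ω : Ω) : ℕ :=
  Set.ncard {τ | 1 ≤ τ ∧ M.play τ ω = 0 ∧ M.r τ ω = true ∧ M.k 0 τ ω < j}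

/-- `tfun j`: the time step at which the `j`-th play of arm `0` happens (`tfun 0 = 0`). -/
noncomputable def tfun (M : TSModel N μ P) : ℕ → Ω → ℕ
  | 0, _ => 0
  | (j + 1), ω => sInf {t | 1 ≤ t ∧ M.play t ω = 0 ∧ M.k 0 t ω = j}

end TSModel


section AuxAnalysis
open Real Finset

lemma quarter_bound (a b : ℝ) (ha : 0 ≤ a) (hb : 0 ≤ b) (hab : 0 < a + b) :
    a * b / (a + b) ^ 2 ≤ 1 / 4 := by
  rw [div_le_iff₀ (by positivity)]
  nlinarith [sq_nonneg (a - b)]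

lemma bern_mgf_bound {p : ℝ} (hp0 : 0 ≤ p) (hp1 : p ≤ 1) (x : ℝ) :
    1 - p + p * Real.exp x ≤ Real.exp (p * x + x ^ 2 / 8) := by
  have hgpos : ∀ y : ℝ, 0 < 1 - p + p * Real.exp y := by
    intro y
    rcases eq_or_lt_of_le hp0 with h | h
    · simp [← h]
    · nlinarith [mul_pos h (exp_pos y)]
  have hgd : ∀ y : ℝ, HasDerivAt (fun y => 1 - p + p * Real.exp y) (p * Real.exp y) y := by
    intro y
    simpa using ((Real.hasDerivAt_exp y).const_mul p).const_add (1 - p)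
  have hFd : ∀ y : ℝ, HasDerivAt
      (fun y => p * y + y ^ 2 / 8 - Real.log (1 - p + p * Real.exp y))
      (p + y * 2 / 8 - p * Real.exp y / (1 - p + p * Real.exp y)) y := by
    intro y
    have h1 : HasDerivAt (fun y : ℝ => p * y + y ^ 2 / 8) (p * 1 + 2 * y ^ 1 / 8) y :=
      ((hasDerivAt_id y).const_mul p).add ((hasDerivAt_pow 2 y).div_const 8)
    have h2 : HasDerivAt (fun y => Real.log (1 - p + p * Real.exp y))
        (p * Real.exp y / (1 - p + p * Real.exp y)) y :=
      (hgd y).log (hgpos y).ne'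
    exact (h1.sub h2).congr_deriv (by ring)
  have hF'd : ∀ y : ℝ, HasDerivAt
      (fun y => p + y * 2 / 8 - p * Real.exp y / (1 - p + p * Real.exp y))
      (1/4 - (p * Real.exp y * (1 - p)) / (1 - p + p * Real.exp y) ^ 2) y := by
    intro y
    have h2 : HasDerivAt (fun y => p * Real.exp y / (1 - p + p * Real.exp y))
        ((p * Real.exp y * (1 - p + p * Real.exp y) - p * Real.exp y * (p * Real.exp y))
          / (1 - p + p * Real.exp y) ^ 2) y :=
      ((Real.hasDerivAt_exp y).const_mul p).div (hgd y) (hgpos y).ne'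
    have h1 : HasDerivAt (fun y : ℝ => p + y * 2 / 8) (1/4) y := by
      have : HasDerivAt (fun y : ℝ => y * 2 / 8) (1 * 2 / 8) y :=
        ((hasDerivAt_id y).mul_const 2).div_const 8
      exact (this.const_add p).congr_deriv (by norm_num)
    have : p * Real.exp y * (1 - p + p * Real.exp y) - p * Real.exp y * (p * Real.exp y)
        = p * Real.exp y * (1 - p) := by ring
    exact (h1.sub h2).congr_deriv (by rw [this])
  have hF'nonneg : ∀ y : ℝ,
      0 ≤ 1/4 - (p * Real.exp y * (1 - p)) / (1 - p + p * Real.exp y) ^ 2 := by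
    intro y
    have := quarter_bound (1 - p) (p * Real.exp y) (by linarith)
      (mul_nonneg hp0 (exp_pos y).le) (hgpos y)
    have h2 : p * Real.exp y * (1 - p) = (1 - p) * (p * Real.exp y) := by ring
    rw [h2]
    linarith
  have hF'mono : Monotone (fun y => p + y * 2 / 8 - p * Real.exp y / (1 - p + p * Real.exp y)) :=
    monotone_of_hasDerivAt_nonneg hF'd hF'nonneg
  have hF'0 : p + 0 * 2 / 8 - p * Real.exp 0 / (1 - p + p * Real.exp 0) = 0 := by
    simp
  have key : ∀ y : ℝ, 0 ≤ p * y + y ^ 2 / 8 - Real.log (1 - p + p * Real.exp y) := by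
    have hF0 : p * 0 + 0 ^ 2 / 8 - Real.log (1 - p + p * Real.exp 0) = 0 := by simp
    intro y
    rcases le_total 0 y with h | h
    · have hm : MonotoneOn (fun y => p * y + y ^ 2 / 8 - Real.log (1 - p + p * Real.exp y))
          (Set.Ici 0) := by
        apply monotoneOn_of_hasDerivWithinAt_nonneg (convex_Ici 0)
          (fun z _ => (hFd z).continuousAt.continuousWithinAt)
          (fun z _ => (hFd z).hasDerivWithinAt)
        intro z hz
        rw [interior_Ici] at hz
        calc (0:ℝ) = p + 0 * 2 / 8 - p * Real.exp 0 / (1 - p + p * Real.exp 0) := hF'0.symm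
          _ ≤ _ := hF'mono hz.le
      have h2 : p * 0 + 0 ^ 2 / 8 - Real.log (1 - p + p * Real.exp 0)
          ≤ p * y + y ^ 2 / 8 - Real.log (1 - p + p * Real.exp y) :=
        hm Set.self_mem_Ici (Set.mem_Ici.2 h) h
      linarith
    · have hm : AntitoneOn (fun y => p * y + y ^ 2 / 8 - Real.log (1 - p + p * Real.exp y))
          (Set.Iic 0) := by
        apply antitoneOn_of_hasDerivWithinAt_nonpos (convex_Iic 0)
          (fun z _ => (hFd z).continuousAt.continuousWithinAt)
          (fun z _ => (hFd z).hasDerivWithinAt)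
        intro z hz
        rw [interior_Iic] at hz
        calc p + z * 2 / 8 - p * Real.exp z / (1 - p + p * Real.exp z)
            ≤ p + 0 * 2 / 8 - p * Real.exp 0 / (1 - p + p * Real.exp 0) := hF'mono hz.le
          _ = 0 := hF'0
      have h2 : p * 0 + 0 ^ 2 / 8 - Real.log (1 - p + p * Real.exp 0)
          ≤ p * y + y ^ 2 / 8 - Real.log (1 - p + p * Real.exp y) :=
        hm (Set.mem_Iic.2 h) Set.self_mem_Iic h
      linarith
  have hlog : Real.log (1 - p + p * Real.exp x) ≤ p * x + x ^ 2 / 8 := by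
    have := key x; linarith
  calc 1 - p + p * Real.exp x = Real.exp (Real.log (1 - p + p * Real.exp x)) :=
        (Real.exp_log (hgpos x)).symm
    _ ≤ _ := exp_le_exp.2 hlog

lemma binPMF_nonneg {n : ℕ} {p : ℝ} (hp0 : 0 ≤ p) (hp1 : p ≤ 1) (s : ℕ) :
    0 ≤ binPMF n p s := by
  unfold binPMF
  have : (0:ℝ) ≤ 1 - p := by linarith
  positivity

lemma binom_sum_mul (n : ℕ) (p r : ℝ) :
    ∑ s ∈ range (n + 1), binPMF n p s * r ^ s = (p * r + (1 - p)) ^ n := by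
  rw [add_pow]
  refine Finset.sum_congr rfl fun s _ => ?_
  unfold binPMF
  rw [mul_pow]
  ring

lemma binom_sum_one (n : ℕ) (p : ℝ) : ∑ s ∈ range (n + 1), binPMF n p s = 1 := by
  have := binom_sum_mul n p 1
  simp only [mul_one, one_pow] at this
  rw [this]
  norm_num

lemma binom_low_tail (n s : ℕ) (p ε : ℝ) (hp0 : 0 ≤ p) (hp1 : p ≤ 1) (hε : 0 ≤ ε)
    (hs : (s : ℝ) ≤ (p - ε) * n) :
    ∑ j ∈ range (s + 1), binPMF n p j ≤ Real.exp (-(2 * ε ^ 2 * n)) := by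
  have hsn : s ≤ n := by
    have h1 : (s : ℝ) ≤ n := le_trans hs (by nlinarith [Nat.cast_nonneg (α := ℝ) n])
    exact_mod_cast h1
  have key : ∀ j ∈ range (s + 1),
      binPMF n p j ≤ binPMF n p j * (Real.exp (4 * ε * ((s : ℝ) - j))) := by
    intro j hj
    have hjs : (j : ℝ) ≤ s := by
      have := Finset.mem_range.1 hj; exact_mod_cast Nat.lt_succ_iff.1 this
    nlinarith [binPMF_nonneg (n := n) hp0 hp1 j,
      Real.one_le_exp (by nlinarith : (0:ℝ) ≤ 4 * ε * ((s : ℝ) - j))]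
  calc ∑ j ∈ range (s + 1), binPMF n p j
      ≤ ∑ j ∈ range (s + 1), binPMF n p j * Real.exp (4 * ε * ((s : ℝ) - j)) :=
        Finset.sum_le_sum key
    _ ≤ ∑ j ∈ range (n + 1), binPMF n p j * Real.exp (4 * ε * ((s : ℝ) - j)) := by
        apply Finset.sum_le_sum_of_subset_of_nonneg
          (Finset.range_subset_range.2 (by omega))
        intro j _ _
        exact mul_nonneg (binPMF_nonneg hp0 hp1 j) (Real.exp_pos _).le
    _ = Real.exp (4 * ε * s) * ∑ j ∈ range (n + 1), binPMF n p j * (Real.exp (-(4*ε))) ^ j := by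
        rw [Finset.mul_sum]
        refine Finset.sum_congr rfl fun j _ => ?_
        rw [← Real.exp_nat_mul,
          show 4 * ε * ((s:ℝ) - j) = 4 * ε * s + (j : ℝ) * (-(4*ε)) by ring,
          Real.exp_add]
        ring
    _ = Real.exp (4 * ε * s) * (p * Real.exp (-(4*ε)) + (1 - p)) ^ n := by
        rw [binom_sum_mul]
    _ ≤ Real.exp (4 * ε * s) * (Real.exp (p * (-(4*ε)) + (-(4*ε)) ^ 2 / 8)) ^ n := by
        apply mul_le_mul_of_nonneg_left _ (Real.exp_pos _).le
        apply pow_le_pow_left₀ _ _ n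
        · have h1p : (0:ℝ) ≤ 1 - p := by linarith
          positivity
        · have := bern_mgf_bound hp0 hp1 (-(4*ε))
          linarith
    _ = Real.exp (4 * ε * s + (p * (-(4*ε)) + (-(4*ε)) ^ 2 / 8) * n) := by
        rw [← Real.exp_nat_mul, ← Real.exp_add]
        ring_nf
    _ ≤ Real.exp (-(2 * ε ^ 2 * n)) := by
        apply Real.exp_le_exp.2
        have h1 : 4 * ε * (s:ℝ) ≤ 4 * ε * ((p - ε) * n) := by
          apply mul_le_mul_of_nonneg_left hs (by linarith)
        nlinarith [Nat.cast_nonneg (α := ℝ) n]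

lemma telescope_Ico (T : ℕ → ℝ) {a b : ℕ} (hab : a ≤ b) :
    ∑ j ∈ Finset.Ico a b, (T j - T (j+1)) = T a - T b := by
  rw [Finset.sum_Ico_eq_sum_range]
  have h := Finset.sum_range_sub' (fun i => T (a + i)) (b - a)
  simpa [Nat.add_sub_cancel' hab, Nat.add_assoc] using h

lemma hasDerivAt_Gsum (s f : ℕ) (y : ℝ) :
    HasDerivAt (fun y => ∑ j ∈ Finset.Ico (s+1) (s+f+2), binPMF (s+f+1) y j)
      (((s+f+1).choose (s+1) : ℝ) * (s+1) * y ^ s * (1 - y) ^ f) y := by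
  set n := s + f + 1 with hn
  set T : ℕ → ℝ := fun j => (n.choose j : ℝ) * j * y ^ (j-1) * (1 - y) ^ (n - j) with hT
  have h1my : ∀ m : ℕ, HasDerivAt (fun y : ℝ => (1 - y) ^ m)
      (-((m : ℝ) * (1 - y) ^ (m - 1))) y := by
    intro m
    have h := (hasDerivAt_pow m (1 - y)).comp y ((hasDerivAt_const y (1:ℝ)).sub (hasDerivAt_id y))
    exact h.congr_deriv (by ring)
  have hterm : ∀ j ∈ Finset.Ico (s+1) (s+f+2),
      HasDerivAt (fun y => binPMF n y j) (T j - T (j+1)) y := by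
    intro j hj
    rw [Finset.mem_Ico] at hj
    have hj1 : 1 ≤ j := le_trans (by omega) hj.1
    have hjn : j ≤ n := by omega
    have hmul : HasDerivAt (fun y : ℝ => (n.choose j : ℝ) * y ^ j * (1 - y) ^ (n - j))
        (((n.choose j : ℝ) * ((j : ℝ) * y ^ (j-1))) * (1 - y) ^ (n - j)
          + ((n.choose j : ℝ) * y ^ j) * (-(((n - j : ℕ) : ℝ) * (1 - y) ^ (n - j - 1)))) y :=
      ((hasDerivAt_pow j y).const_mul ((n.choose j : ℕ) : ℝ)).mul (h1my (n - j))
    have : (fun y => binPMF n y j) = fun y : ℝ => (n.choose j : ℝ) * y ^ j * (1 - y) ^ (n - j) := by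
      funext z; rfl
    rw [this]
    convert hmul using 1
    have hco : ((n.choose (j+1) : ℕ) : ℝ) * ((j + 1 : ℕ) : ℝ)
        = ((n.choose j : ℕ) : ℝ) * ((n - j : ℕ) : ℝ) := by
      exact_mod_cast congrArg (Nat.cast (R := ℝ)) (Nat.choose_succ_right_eq n j)
    simp only [hT]
    rw [show n - (j+1) = n - j - 1 from by omega, show (j+1) - 1 = j from rfl]
    push_cast at hco ⊢
    linear_combination (-(y ^ j * (1 - y) ^ (n - j - 1))) * hco
  have hsum := HasDerivAt.fun_sum hterm
  have htel : ∑ j ∈ Finset.Ico (s+1) (s+f+2), (T j - T (j+1)) = T (s+1) - T (s+f+2) :=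
    telescope_Ico T (by omega)
  rw [htel] at hsum
  have hT2 : T (s+f+2) = 0 := by
    simp only [hT]
    rw [Nat.choose_eq_zero_of_lt (by omega)]
    simp
  have hT1 : T (s+1) = ((s+f+1).choose (s+1) : ℝ) * (s+1) * y ^ s * (1 - y) ^ f := by
    simp only [hT]
    rw [show n - (s+1) = f from by omega, show (s+1) - 1 = s from rfl]
    push_cast
    ring
  rw [hT2, hT1, sub_zero] at hsum
  exact hsum

lemma betaPDF_indicator (s f : ℕ) : _root_.betaPDF (s+1) (f+1)
    = Set.indicator (Set.Ioo (0:ℝ) 1)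
        (fun x => ((s+f+1).choose (s+1) : ℝ) * (s+1) * x ^ s * (1-x) ^ f) := by
  have hnat : (s+f+1).choose (s+1) * ((s+1) * Nat.factorial s) * Nat.factorial f = Nat.factorial (s+f+1) := by
    have h := Nat.choose_mul_factorial_mul_factorial (show s+1 ≤ s+f+1 by omega)
    rw [show (s+f+1) - (s+1) = f from by omega] at h
    rw [← h, Nat.factorial_succ]
  have hconst : Real.Gamma (((s+1:ℕ) : ℝ) + ((f+1:ℕ) : ℝ))
      / (Real.Gamma ((s+1:ℕ) : ℝ) * Real.Gamma ((f+1:ℕ) : ℝ))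
      = ((s+f+1).choose (s+1) : ℝ) * (s+1) := by
    rw [show (((s+1:ℕ) : ℝ) + ((f+1:ℕ) : ℝ)) = ((s+f+1 : ℕ) : ℝ) + 1 by push_cast; ring,
      show (((s+1:ℕ)) : ℝ) = ((s:ℕ) : ℝ) + 1 by push_cast; ring,
      show (((f+1:ℕ)) : ℝ) = ((f:ℕ) : ℝ) + 1 by push_cast; ring,
      Real.Gamma_nat_eq_factorial, Real.Gamma_nat_eq_factorial, Real.Gamma_nat_eq_factorial]
    rw [div_eq_iff (by positivity)]
    have := congrArg (Nat.cast (R := ℝ)) hnat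
    push_cast at this
    linarith
  funext x
  simp only [_root_.betaPDF, Set.indicator_apply, Set.mem_Ioo]
  split_ifs with h
  · rw [show (s+1) - 1 = s from rfl, show (f+1) - 1 = f from rfl]
    rw [hconst]
  · rfl

lemma betaCDF_restrict (s f : ℕ) (y : ℝ) :
    betaCDF (s+1) (f+1) y
      = ∫ x in Set.Ioo (0:ℝ) 1 ∩ Set.Iic y,
          ((s+f+1).choose (s+1) : ℝ) * (s+1) * x ^ s * (1-x) ^ f := by
  unfold betaCDF
  rw [betaPDF_indicator]
  rw [MeasureTheory.integral_indicator measurableSet_Ioo]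
  rw [MeasureTheory.Measure.restrict_restrict measurableSet_Ioo]

lemma integral_Ioc_poly (s f : ℕ) {a y : ℝ} (hy : a ≤ y) :
    ∫ x in Set.Ioc a y, ((s+f+1).choose (s+1) : ℝ) * (s+1) * x ^ s * (1-x) ^ f
      = (∑ j ∈ Finset.Ico (s+1) (s+f+2), binPMF (s+f+1) y j)
        - (∑ j ∈ Finset.Ico (s+1) (s+f+2), binPMF (s+f+1) a j) := by
  have hcont : Continuous (fun x : ℝ => ((s+f+1).choose (s+1) : ℝ) * (s+1) * x ^ s * (1-x) ^ f) := by
    fun_prop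
  rw [← intervalIntegral.integral_of_le hy]
  exact intervalIntegral.integral_eq_sub_of_hasDerivAt
    (fun x _ => hasDerivAt_Gsum s f x) (hcont.intervalIntegrable a y)

lemma Gsum_zero (s f : ℕ) : (∑ j ∈ Finset.Ico (s+1) (s+f+2), binPMF (s+f+1) (0:ℝ) j) = 0 := by
  apply Finset.sum_eq_zero
  intro j hj
  rw [Finset.mem_Ico] at hj
  unfold binPMF
  rw [zero_pow (by omega)]
  ring

lemma Gsum_one (s f : ℕ) : (∑ j ∈ Finset.Ico (s+1) (s+f+2), binPMF (s+f+1) (1:ℝ) j) = 1 := by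
  rw [Finset.sum_eq_single (s+f+1)]
  · unfold binPMF
    simp
  · intro j hj hne
    rw [Finset.mem_Ico] at hj
    unfold binPMF
    rw [show (1:ℝ) - 1 = 0 by ring, zero_pow (by omega)]
    ring
  · intro h
    exact absurd (Finset.mem_Ico.2 (by omega)) h

lemma Ioc_ae (y : ℝ) (hy : 0 < y) :
    (Set.Ioo (0:ℝ) 1 ∩ Set.Iic y : Set ℝ) =ᵐ[MeasureTheory.volume] (Set.Ioc 0 (min y 1)) := by
  rw [MeasureTheory.ae_eq_set]
  constructor
  · have hsub : (Set.Ioo (0:ℝ) 1 ∩ Set.Iic y) ⊆ Set.Ioc 0 (min y 1) := by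
      rintro x ⟨⟨h1, h2⟩, h3⟩
      exact ⟨h1, le_min h3 h2.le⟩
    rw [Set.diff_eq_empty.2 hsub]
    exact MeasureTheory.measure_empty
  · refine MeasureTheory.measure_mono_null ?_ (Real.volume_singleton (a := 1))
    rintro x ⟨⟨h1, h2⟩, h4⟩
    rw [le_min_iff] at h2
    simp only [Set.mem_inter_iff, Set.mem_Ioo, Set.mem_Iic, not_and] at h4
    simp only [Set.mem_singleton_iff]
    by_contra hne
    have hx1 : x < 1 := lt_of_le_of_ne h2.2 hne
    exact h4 ⟨h1, hx1⟩ h2.1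

lemma betaCDF_eq_sum (s f : ℕ) {y : ℝ} (hy0 : 0 ≤ y) (hy1 : y ≤ 1) :
    betaCDF (s+1) (f+1) y = ∑ j ∈ Finset.Ico (s+1) (s+f+2), binPMF (s+f+1) y j := by
  rcases eq_or_lt_of_le hy0 with h0 | h0
  · rw [betaCDF_restrict, ← h0]
    have : (Set.Ioo (0:ℝ) 1 ∩ Set.Iic 0 : Set ℝ) = ∅ := by
      ext x
      simp only [Set.mem_inter_iff, Set.mem_Ioo, Set.mem_Iic, Set.mem_empty_iff_false, iff_false,
        not_and]
      rintro ⟨h1, _⟩ h3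
      linarith
    rw [this]
    simp [Gsum_zero s f]
  · rw [betaCDF_restrict, MeasureTheory.setIntegral_congr_set (Ioc_ae y h0),
      min_eq_left hy1, integral_Ioc_poly s f hy0, Gsum_zero, sub_zero]

lemma betaCDF_eq_one (s f : ℕ) {y : ℝ} (hy : 1 ≤ y) : betaCDF (s+1) (f+1) y = 1 := by
  rw [betaCDF_restrict, MeasureTheory.setIntegral_congr_set (Ioc_ae y (by linarith)),
    min_eq_right hy, integral_Ioc_poly s f (by norm_num), Gsum_zero, sub_zero, Gsum_one]

end AuxAnalysis

section AuxModel
open TSModel MeasureTheory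

variable {Ω : Type*} [MeasurableSpace Ω] {P : Measure Ω}
  [IsProbabilityMeasure P] {μ : Fin 2 → ℝ}

/-- The event that the history of (arm, reward) pairs at times `1,…,j` equals `h`. -/
def EvP (M : TSModel 2 μ P) (j : ℕ) (h : Fin j → Fin 2 × Bool) : Set Ω :=
  {ω | ∀ τ : Fin j, (M.play ((τ : ℕ) + 1) ω, M.r ((τ : ℕ) + 1) ω) = h τ}

lemma measurableSet_EvP (M : TSModel 2 μ P) (j : ℕ) (h : Fin j → Fin 2 × Bool) :
    MeasurableSet (EvP M j h) := by
  have he : EvP M j h = ⋂ τ : Fin j,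
      ((M.play ((τ:ℕ)+1)) ⁻¹' {(h τ).1} ∩ (M.r ((τ:ℕ)+1)) ⁻¹' {(h τ).2}) := by
    ext ω
    simp [EvP, Set.mem_iInter, Prod.ext_iff]
  rw [he]
  exact MeasurableSet.iInter fun τ =>
    ((M.meas_play _ (measurableSet_singleton _)).inter (M.meas_r _ (measurableSet_singleton _)))

lemma measurableSet_play (M : TSModel 2 μ P) (t : ℕ) (i : Fin 2) :
    MeasurableSet {ω : Ω | M.play t ω = i} :=
  M.meas_play t (measurableSet_singleton i)

lemma fin2_ne_zero_iff (x : Fin 2) : ¬ x = 0 ↔ x = 1 := by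
  fin_cases x <;> simp

lemma EvP_snoc (M : TSModel 2 μ P) (j : ℕ) (g : Fin j → Fin 2 × Bool) (y : Fin 2 × Bool) :
    EvP M (j+1) (Fin.snoc g y)
      = {ω : Ω | M.r (j+1) ω = y.2} ∩ (EvP M j g ∩ {ω | M.play (j+1) ω = y.1}) := by
  ext ω
  simp only [EvP, Set.mem_setOf_eq, Set.mem_inter_iff]
  constructor
  · intro hh
    have hlast := hh (Fin.last j)
    rw [Fin.snoc_last] at hlast
    simp only [Fin.val_last] at hlast
    refine ⟨(Prod.ext_iff.1 hlast).2, fun τ => ?_, (Prod.ext_iff.1 hlast).1⟩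
    have := hh τ.castSucc
    rwa [Fin.snoc_castSucc, Fin.coe_castSucc] at this
  · rintro ⟨hr, hg, hp⟩ τ
    refine Fin.lastCases ?_ ?_ τ
    · rw [Fin.snoc_last]
      simp only [Fin.val_last]
      exact Prod.ext hp hr
    · intro τ'
      rw [Fin.snoc_castSucc, Fin.coe_castSucc]
      exact hg τ'

lemma reward_step (M : TSModel 2 μ P)
    (hμ0 : μ 0 ≤ 1) (hμ1 : 0 ≤ μ 1) (hgap : μ 1 < μ 0)
    (j : ℕ) (g : Fin j → Fin 2 × Bool) (i : Fin 2) (b : Bool) :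
    (P (EvP M (j+1) (Fin.snoc g (i, b)))).toReal
      = (if b then μ i else 1 - μ i) *
        (P (EvP M j g ∩ {ω | M.play (j+1) ω = i})).toReal := by
  have hμi0 : 0 ≤ μ i := by
    fin_cases i
    · exact le_trans hμ1 hgap.le
    · exact hμ1
  have hμi1 : μ i ≤ 1 := by
    fin_cases i
    · exact hμ0
    · exact le_trans hgap.le hμ0
  have hax := M.reward (j+1) i g Set.univ MeasurableSet.univ
  have huniv : {ω : Ω | (fun i => M.θ (j+1) i ω) ∈ Set.univ} = Set.univ := by
    ext ω; simp
  rw [huniv, Set.univ_inter, Set.inter_univ] at hax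
  have hax' : P ({ω : Ω | M.r (j+1) ω = true} ∩ EvP M j g ∩ {ω | M.play (j+1) ω = i})
      = ENNReal.ofReal (μ i) * P (EvP M j g ∩ {ω | M.play (j+1) ω = i}) := hax
  -- hax : P ({r = true} ∩ EvP ∩ {play = i}) = ofReal (μ i) * P (EvP ∩ {play = i})
  have htrue : (P ({ω : Ω | M.r (j+1) ω = true} ∩ (EvP M j g ∩ {ω | M.play (j+1) ω = i}))).toReal
      = μ i * (P (EvP M j g ∩ {ω | M.play (j+1) ω = i})).toReal := by
    rw [← Set.inter_assoc]
    rw [hax', ENNReal.toReal_mul, ENNReal.toReal_ofReal hμi0]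
  rw [EvP_snoc]
  cases b
  · -- b = false
    have hC := measure_inter_add_diff (μ := P)
      (EvP M j g ∩ {ω : Ω | M.play (j+1) ω = i}) (M.meas_r (j+1) (measurableSet_singleton true))
    have hsets : (EvP M j g ∩ {ω : Ω | M.play (j+1) ω = i}) ∩ (M.r (j+1) ⁻¹' {true})
        = {ω : Ω | M.r (j+1) ω = true} ∩ (EvP M j g ∩ {ω | M.play (j+1) ω = i}) := by
      ext ω; simp only [Set.mem_inter_iff, Set.mem_preimage, Set.mem_singleton_iff,
        Set.mem_setOf_eq]; tauto
    have hsets2 : (EvP M j g ∩ {ω : Ω | M.play (j+1) ω = i}) \ (M.r (j+1) ⁻¹' {true})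
        = {ω : Ω | M.r (j+1) ω = false} ∩ (EvP M j g ∩ {ω | M.play (j+1) ω = i}) := by
      ext ω; simp only [Set.mem_diff, Set.mem_inter_iff, Set.mem_preimage, Set.mem_singleton_iff,
        Set.mem_setOf_eq, Bool.not_eq_true]
      tauto
    rw [hsets, hsets2] at hC
    have := congrArg ENNReal.toReal hC
    rw [ENNReal.toReal_add (measure_ne_top P _) (measure_ne_top P _)] at this
    simp only [Bool.false_eq_true, if_false]
    rw [htrue] at this
    linarith
  · -- b = true
    simpa using htrue

lemma play_split (M : TSModel 2 μ P) (E : Set Ω) (t : ℕ) :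
    (P E).toReal = (P (E ∩ {ω | M.play t ω = 0})).toReal
      + (P (E ∩ {ω | M.play t ω = 1})).toReal := by
  have hC := measure_inter_add_diff (μ := P) E (measurableSet_play M t 0)
  have hsets2 : E \ {ω : Ω | M.play t ω = 0} = E ∩ {ω : Ω | M.play t ω = 1} := by
    ext ω
    simp only [Set.mem_diff, Set.mem_inter_iff, Set.mem_preimage, Set.mem_singleton_iff,
      Set.mem_setOf_eq]
    rw [fin2_ne_zero_iff]
  rw [hsets2] at hC
  have := congrArg ENNReal.toReal hC
  rw [ENNReal.toReal_add (measure_ne_top P _) (measure_ne_top P _)] at this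
  linarith

def snocEquivFun (j : ℕ) (X : Type*) : ((Fin j → X) × X) ≃ (Fin (j+1) → X) where
  toFun p := Fin.snoc p.1 p.2
  invFun h := (Fin.init h, h (Fin.last j))
  left_inv p := by
    refine Prod.ext ?_ ?_
    · funext τ; simp [Fin.init_snoc]
    · simp [Fin.snoc_last]
  right_inv h := by simp [Fin.snoc_init_self]

@[simp] lemma snocEquivFun_apply (j : ℕ) (X : Type*) (g : Fin j → X) (y : X) :
    snocEquivFun j X (g, y) = Fin.snoc g y := rfl

lemma lemA (M : TSModel 2 μ P)
    (hμ0 : μ 0 ≤ 1) (hμ1 : 0 ≤ μ 1) (hgap : μ 1 < μ 0)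
    (f : Fin 2 × Bool → ℝ) (hf0 : ∀ y, 0 ≤ f y)
    (hf : ∀ i : Fin 2, f (i, true) * μ i + f (i, false) * (1 - μ i) ≤ 1) :
    ∀ j : ℕ, ∑ h : Fin j → Fin 2 × Bool, (∏ τ, f (h τ)) * (P (EvP M j h)).toReal ≤ 1 := by
  intro j
  induction j with
  | zero =>
    rw [Fintype.sum_unique]
    have hu : ∀ h0 : Fin 0 → Fin 2 × Bool, EvP M 0 h0 = Set.univ := by
      intro h0; ext ω; simp [EvP]
    simp [hu]
  | succ j ih =>
    classical
    have key : ∀ (g : Fin j → Fin 2 × Bool) (y : Fin 2 × Bool),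
        (∏ τ : Fin (j+1), f (Fin.snoc (α := fun _ => Fin 2 × Bool) g y τ)) * (P (EvP M (j+1) (Fin.snoc g y))).toReal
        = (∏ τ : Fin j, f (g τ)) * (f y * ((if y.2 then μ y.1 else 1 - μ y.1)
            * (P (EvP M j g ∩ {ω | M.play (j+1) ω = y.1})).toReal)) := by
      intro g y
      have hprod : (∏ τ : Fin (j+1), f (Fin.snoc (α := fun _ => Fin 2 × Bool) g y τ)) = (∏ τ : Fin j, f (g τ)) * f y := by
        rw [Fin.prod_univ_castSucc]
        simp [Fin.snoc_castSucc, Fin.snoc_last]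
      have hmeas : (P (EvP M (j+1) (Fin.snoc g y))).toReal
          = (if y.2 then μ y.1 else 1 - μ y.1)
            * (P (EvP M j g ∩ {ω | M.play (j+1) ω = y.1})).toReal := by
        obtain ⟨i, b⟩ := y
        exact reward_step M hμ0 hμ1 hgap j g i b
      rw [hprod, hmeas]
      ring
    have hsum : ∑ h : Fin (j+1) → Fin 2 × Bool, (∏ τ, f (h τ)) * (P (EvP M (j+1) h)).toReal
        = ∑ g : Fin j → Fin 2 × Bool, ∑ y : Fin 2 × Bool,
            (∏ τ : Fin j, f (g τ)) * (f y * ((if y.2 then μ y.1 else 1 - μ y.1)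
              * (P (EvP M j g ∩ {ω | M.play (j+1) ω = y.1})).toReal)) := by
      rw [← Equiv.sum_comp (snocEquivFun j (Fin 2 × Bool))
        (fun h => (∏ τ, f (h τ)) * (P (EvP M (j+1) h)).toReal), Fintype.sum_prod_type]
      exact Finset.sum_congr rfl fun g _ => Finset.sum_congr rfl fun y _ => key g y
    rw [hsum]
    have hstep : ∀ (g : Fin j → Fin 2 × Bool),
        ∑ y : Fin 2 × Bool, (∏ τ : Fin j, f (g τ)) * (f y * ((if y.2 then μ y.1 else 1 - μ y.1)
            * (P (EvP M j g ∩ {ω | M.play (j+1) ω = y.1})).toReal))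
        ≤ (∏ τ, f (g τ)) * (P (EvP M j g)).toReal := by
      intro g
      rw [← Finset.mul_sum]
      apply mul_le_mul_of_nonneg_left _ (Finset.prod_nonneg fun τ _ => hf0 _)
      rw [Fintype.sum_prod_type]
      have hbool : ∀ i : Fin 2,
          ∑ b : Bool, f (i, b) * ((if b then μ i else 1 - μ i)
            * (P (EvP M j g ∩ {ω | M.play (j+1) ω = i})).toReal)
          ≤ (P (EvP M j g ∩ {ω | M.play (j+1) ω = i})).toReal := by
        intro i
        rw [Fintype.sum_bool]
        simp only [if_true, Bool.false_eq_true, if_false]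
        have h0 : (0:ℝ) ≤ (P (EvP M j g ∩ {ω | M.play (j+1) ω = i})).toReal :=
          ENNReal.toReal_nonneg
        calc f (i, true) * (μ i * (P (EvP M j g ∩ {ω | M.play (j+1) ω = i})).toReal)
              + f (i, false) * ((1 - μ i) * (P (EvP M j g ∩ {ω | M.play (j+1) ω = i})).toReal)
            = (f (i, true) * μ i + f (i, false) * (1 - μ i))
              * (P (EvP M j g ∩ {ω | M.play (j+1) ω = i})).toReal := by ring
          _ ≤ 1 * (P (EvP M j g ∩ {ω | M.play (j+1) ω = i})).toReal :=
              mul_le_mul_of_nonneg_right (hf i) h0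
          _ = _ := one_mul _
      calc ∑ i : Fin 2, ∑ b : Bool, f (i, b) * ((if b then μ i else 1 - μ i)
            * (P (EvP M j g ∩ {ω | M.play (j+1) ω = i})).toReal)
          ≤ ∑ i : Fin 2, (P (EvP M j g ∩ {ω | M.play (j+1) ω = i})).toReal :=
            Finset.sum_le_sum fun i _ => hbool i
        _ = (P (EvP M j g)).toReal := by
            rw [Fin.sum_univ_two]
            exact (play_split M (EvP M j g) (j+1)).symm
    calc ∑ g : Fin j → Fin 2 × Bool, ∑ y : Fin 2 × Bool,
          (∏ τ : Fin j, f (g τ)) * (f y * ((if y.2 then μ y.1 else 1 - μ y.1)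
            * (P (EvP M j g ∩ {ω | M.play (j+1) ω = y.1})).toReal))
        ≤ ∑ g : Fin j → Fin 2 × Bool, (∏ τ, f (g τ)) * (P (EvP M j g)).toReal :=
          Finset.sum_le_sum fun g _ => hstep g
      _ ≤ 1 := ih

end AuxModel

section AuxModel2
open TSModel MeasureTheory

variable {Ω : Type*} [MeasurableSpace Ω] {P : Measure Ω}
  [IsProbabilityMeasure P] {μ : Fin 2 → ℝ}

lemma k_on_EvP (M : TSModel 2 μ P) (t : ℕ) (h : Fin (t-1) → Fin 2 × Bool) {ω : Ω}
    (hω : ω ∈ EvP M (t-1) h) :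
    M.k 1 t ω = (Finset.univ.filter fun τ : Fin (t-1) => (h τ).1 = 1).card := by
  classical
  unfold TSModel.k
  rw [Finset.card_filter, Finset.card_filter]
  rw [Finset.sum_Ico_eq_sum_range]
  rw [← Fin.sum_univ_eq_sum_range (fun i => if M.play (1 + i) ω = 1 then 1 else 0) (t-1)]
  refine Finset.sum_congr rfl fun τ _ => ?_
  have hτ := hω τ
  have hp : M.play (1 + (τ:ℕ)) ω = (h τ).1 := by
    rw [add_comm]
    exact congrArg Prod.fst hτ
  rw [hp]

lemma K_split (j : ℕ) (h : Fin j → Fin 2 × Bool) :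
    (Finset.univ.filter fun τ : Fin j => (h τ).1 = 1).card
      = (Finset.univ.filter fun τ : Fin j => h τ = (1, true)).card
        + (Finset.univ.filter fun τ : Fin j => h τ = (1, false)).card := by
  classical
  rw [Finset.card_filter, Finset.card_filter, Finset.card_filter, ← Finset.sum_add_distrib]
  refine Finset.sum_congr rfl fun τ _ => ?_
  rcases hτ : h τ with ⟨i, b⟩
  fin_cases i <;> cases b <;> simp [hτ, Prod.ext_iff]

lemma weight_exp (j : ℕ) (h : Fin j → Fin 2 × Bool) (a d : ℝ) :
    (∏ τ, Real.exp (if (h τ).1 = 1 then (if (h τ).2 then a - d else -d) else 0))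
      = Real.exp (a * ((Finset.univ.filter fun τ : Fin j => h τ = (1, true)).card : ℝ)
          - d * ((Finset.univ.filter fun τ : Fin j => (h τ).1 = 1).card : ℝ)) := by
  classical
  rw [← Real.exp_sum]
  congr 1
  rw [Finset.card_filter, Finset.card_filter]
  push_cast
  rw [Finset.mul_sum, Finset.mul_sum, ← Finset.sum_sub_distrib]
  refine Finset.sum_congr rfl fun τ _ => ?_
  rcases hτ : h τ with ⟨i, b⟩
  fin_cases i <;> cases b <;> simp [hτ, Prod.ext_iff]

lemma theta_marginal (M : TSModel 2 μ P) (t : ℕ) (c : ℝ) (h : Fin (t-1) → Fin 2 × Bool) :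
    P ({ω | M.θ t 1 ω ≤ c} ∩ EvP M (t-1) h)
      = ENNReal.ofReal
          (betaCDF ((Finset.univ.filter fun τ : Fin (t-1) => h τ = (1, true)).card + 1)
                   ((Finset.univ.filter fun τ : Fin (t-1) => h τ = (1, false)).card + 1) c)
        * P (EvP M (t-1) h) := by
  classical
  set A : ℕ → Set Ω := fun n =>
    ({ω | M.θ t 0 ω ≤ (n:ℝ)} ∩ {ω | M.θ t 1 ω ≤ c}) ∩ EvP M (t-1) h with hA
  have hval : ∀ n : ℕ, 1 ≤ n →
      P (A n) = ENNReal.ofReal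
        (betaCDF ((Finset.univ.filter fun τ : Fin (t-1) => h τ = (1, true)).card + 1)
                 ((Finset.univ.filter fun τ : Fin (t-1) => h τ = (1, false)).card + 1) c)
        * P (EvP M (t-1) h) := by
    intro n hn
    have hbs := M.beta_sample t h ![(n:ℝ), c]
    have hset : {ω : Ω | ∀ i, M.θ t i ω ≤ (![(n:ℝ), c]) i}
        = {ω | M.θ t 0 ω ≤ (n:ℝ)} ∩ {ω | M.θ t 1 ω ≤ c} := by
      ext ω
      constructor
      · intro hh
        exact ⟨by simpa using hh 0, by simpa using hh 1⟩
      · rintro ⟨h1, h2⟩ i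
        fin_cases i
        · simpa using h1
        · simpa using h2
    rw [hset] at hbs
    have hprod : (∏ i : Fin 2,
        betaCDF ((Finset.univ.filter fun τ : Fin (t - 1) => h τ = (i, true)).card + 1)
                ((Finset.univ.filter fun τ : Fin (t - 1) => h τ = (i, false)).card + 1)
                ((![(n:ℝ), c]) i))
        = betaCDF ((Finset.univ.filter fun τ : Fin (t-1) => h τ = (1, true)).card + 1)
                  ((Finset.univ.filter fun τ : Fin (t-1) => h τ = (1, false)).card + 1) c := by
      rw [Fin.prod_univ_two]
      have h0 : betaCDF ((Finset.univ.filter fun τ : Fin (t - 1) => h τ = (0, true)).card + 1)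
          ((Finset.univ.filter fun τ : Fin (t - 1) => h τ = (0, false)).card + 1)
          ((![(n:ℝ), c]) 0) = 1 := by
        rw [show ((![(n:ℝ), c]) 0) = (n:ℝ) from rfl]
        exact betaCDF_eq_one _ _ (by exact_mod_cast hn)
      rw [h0, one_mul]
      rfl
    rw [hprod] at hbs
    exact hbs
  have hmono : Monotone A := by
    intro a b hab
    rintro ω ⟨⟨h1, h2⟩, h3⟩
    have hab' : (a:ℝ) ≤ b := Nat.cast_le.2 hab
    exact ⟨⟨le_trans h1 hab', h2⟩, h3⟩
  have hunion : (⋃ n, A n) = {ω | M.θ t 1 ω ≤ c} ∩ EvP M (t-1) h := by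
    ext ω
    constructor
    · intro hω
      obtain ⟨n, ⟨⟨_, h2⟩, h3⟩⟩ := Set.mem_iUnion.1 hω
      exact ⟨h2, h3⟩
    · rintro ⟨h2, h3⟩
      obtain ⟨n, hn⟩ := exists_nat_ge (M.θ t 0 ω)
      exact Set.mem_iUnion.2 ⟨n, ⟨⟨hn, h2⟩, h3⟩⟩
  rw [← hunion, hmono.directed_le.measure_iUnion]
  apply le_antisymm
  · apply iSup_le
    intro n
    calc P (A n) ≤ P (A (n+1)) := measure_mono (hmono (Nat.le_succ n))
      _ = _ := hval (n+1) (by omega)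
  · rw [← hval 1 le_rfl]
    exact le_iSup (fun n => P (A n)) 1

lemma theta_tail (M : TSModel 2 μ P) (t : ℕ) (c : ℝ) (hc0 : 0 ≤ c) (hc1 : c ≤ 1)
    (h : Fin (t-1) → Fin 2 × Bool) :
    (P ({ω | c < M.θ t 1 ω} ∩ EvP M (t-1) h)).toReal
      = (∑ j ∈ Finset.range ((Finset.univ.filter fun τ : Fin (t-1) => h τ = (1, true)).card + 1),
          binPMF ((Finset.univ.filter fun τ : Fin (t-1) => h τ = (1, true)).card
            + (Finset.univ.filter fun τ : Fin (t-1) => h τ = (1, false)).card + 1) c j)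
        * (P (EvP M (t-1) h)).toReal := by
  classical
  set s1 := (Finset.univ.filter fun τ : Fin (t-1) => h τ = (1, true)).card with hs1
  set f1 := (Finset.univ.filter fun τ : Fin (t-1) => h τ = (1, false)).card with hf1
  have hβ0 : 0 ≤ betaCDF (s1+1) (f1+1) c := by
    rw [betaCDF_eq_sum s1 f1 hc0 hc1]
    exact Finset.sum_nonneg fun j _ => binPMF_nonneg hc0 hc1 j
  have hC := measure_inter_add_diff (μ := P) (EvP M (t-1) h)
    (M.meas_θ t 1 (measurableSet_Iic (a := c)))
  have hset1 : EvP M (t-1) h ∩ (M.θ t 1 ⁻¹' Set.Iic c)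
      = {ω | M.θ t 1 ω ≤ c} ∩ EvP M (t-1) h := by
    ext ω
    simp only [Set.mem_inter_iff, Set.mem_preimage, Set.mem_Iic, Set.mem_setOf_eq]
    tauto
  have hset2 : EvP M (t-1) h \ (M.θ t 1 ⁻¹' Set.Iic c)
      = {ω | c < M.θ t 1 ω} ∩ EvP M (t-1) h := by
    ext ω
    simp only [Set.mem_diff, Set.mem_inter_iff, Set.mem_preimage, Set.mem_Iic,
      Set.mem_setOf_eq, not_le]
    tauto
  rw [hset1, hset2] at hC
  have hCr := congrArg ENNReal.toReal hC
  rw [ENNReal.toReal_add (measure_ne_top P _) (measure_ne_top P _)] at hCr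
  have hmarg : (P ({ω | M.θ t 1 ω ≤ c} ∩ EvP M (t-1) h)).toReal
      = betaCDF (s1+1) (f1+1) c * (P (EvP M (t-1) h)).toReal := by
    rw [theta_marginal M t c h, ENNReal.toReal_mul, ENNReal.toReal_ofReal hβ0]
  have hS : (∑ j ∈ Finset.range (s1+1), binPMF (s1+f1+1) c j) + betaCDF (s1+1) (f1+1) c = 1 := by
    rw [betaCDF_eq_sum s1 f1 hc0 hc1]
    rw [Finset.sum_range_add_sum_Ico _ (show s1+1 ≤ s1+f1+2 by omega)]
    exact binom_sum_one (s1+f1+1) c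
  have hX : (P ({ω | c < M.θ t 1 ω} ∩ EvP M (t-1) h)).toReal
      = (P (EvP M (t-1) h)).toReal
        - betaCDF (s1+1) (f1+1) c * (P (EvP M (t-1) h)).toReal := by
    rw [← hmarg]
    linarith
  rw [hX]
  linear_combination (-(P (EvP M (t-1) h)).toReal) * hS

end AuxModel2

set_option maxHeartbeats 2000000 in
open TSModel in
/-- two-armed Bernoulli Thompson Sampling with `μ₀ > μ₁` (arm `0`
optimal), `Δ = μ₀ − μ₁`, horizon `T`, `L = 24 (ln T)/Δ²`.  For every time step `t`,
the event `E₂(t) = {θ₁(t) ≤ μ₁ + Δ/2 or k₁(t) < L}` has `Pr(E₂(t)) ≥ 1 − 2/T²`. -/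
theorem two_arm_E2_bound {Ω : Type*} [MeasurableSpace Ω] (P : Measure Ω)
    [IsProbabilityMeasure P] (μ : Fin 2 → ℝ)
    (hμ0 : μ 0 ≤ 1) (hμ1 : 0 ≤ μ 1) (hgap : μ 1 < μ 0)
    (M : TSModel 2 μ P) (T : ℕ) (hT : 1 ≤ T)
    (Δ L : ℝ) (hΔ : Δ = μ 0 - μ 1) (hL : L = 24 * Real.log T / Δ ^ 2)
    (t : ℕ) (ht : 1 ≤ t) (ht' : t ≤ T) :
    (P {ω | M.θ t 1 ω ≤ μ 1 + Δ / 2 ∨ (M.k 1 t ω : ℝ) < L}).toReal ≥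
      1 - 2 / (T : ℝ) ^ 2 := by
  classical
  have hT1 : (1:ℝ) ≤ T := by exact_mod_cast hT
  have hTpos : (0:ℝ) < T := by linarith
  have hΔpos : 0 < Δ := by rw [hΔ]; linarith
  have hμ11 : μ 1 ≤ 1 := le_trans hgap.le hμ0
  set ε : ℝ := Δ / 4 with hεd
  have hεpos : 0 < ε := by rw [hεd]; linarith
  set c : ℝ := μ 1 + Δ / 2 with hcd
  have hc0 : 0 ≤ c := by rw [hcd]; linarith
  have hc1 : c ≤ 1 := by rw [hcd, hΔ]; linarith
  have hlogT : 0 ≤ Real.log T := Real.log_nonneg hT1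
  have hL3 : 2 * ε ^ 2 * L = 3 * Real.log T := by
    rw [hεd, hL]
    field_simp
    ring
  have hT3 : Real.exp (-(3 * Real.log T)) = (((T:ℝ))^3)⁻¹ := by
    rw [Real.exp_neg]
    congr 1
    rw [show (3:ℝ) * Real.log T = ((3:ℕ):ℝ) * Real.log T by norm_num,
      Real.exp_nat_mul, Real.exp_log hTpos]
  have hTT : (0:ℝ) < ((T:ℝ))^3 := by positivity
  set d : ℝ := Real.log (1 - μ 1 + μ 1 * Real.exp (4*ε)) with hdd
  have hexp1 : (1:ℝ) ≤ Real.exp (4*ε) := Real.one_le_exp (by positivity)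
  have hden1 : (1:ℝ) ≤ 1 - μ 1 + μ 1 * Real.exp (4*ε) := by nlinarith
  have hdenpos : (0:ℝ) < 1 - μ 1 + μ 1 * Real.exp (4*ε) := by linarith
  have hd_le : d ≤ 4*ε*μ 1 + 2*ε^2 := by
    rw [hdd, Real.log_le_iff_le_exp hdenpos]
    calc 1 - μ 1 + μ 1 * Real.exp (4*ε) ≤ Real.exp (μ 1 * (4*ε) + (4*ε)^2/8) :=
          bern_mgf_bound hμ1 hμ11 (4*ε)
      _ = Real.exp (4*ε*μ 1 + 2*ε^2) := by congr 1; ring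
  set fwt : Fin 2 × Bool → ℝ := fun y =>
    Real.exp (if y.1 = 1 then (if y.2 then 4*ε - d else -d) else 0) with hfwtd
  have hfwt0 : ∀ y, 0 ≤ fwt y := fun y => (Real.exp_pos _).le
  have hv0 : ∀ b : Bool, fwt (0, b) = 1 := by
    intro b
    rw [hfwtd]
    norm_num
  have hv1t : fwt (1, true) = Real.exp (4*ε - d) := by rw [hfwtd]; norm_num
  have hv1f : fwt (1, false) = Real.exp (-d) := by rw [hfwtd]; norm_num
  have hfwtcond : ∀ i : Fin 2, fwt (i, true) * μ i + fwt (i, false) * (1 - μ i) ≤ 1 := by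
    intro i
    fin_cases i
    · rw [show ((⟨0, by omega⟩ : Fin 2)) = (0 : Fin 2) from rfl, hv0, hv0]
      linarith
    · rw [show ((⟨1, by omega⟩ : Fin 2)) = (1 : Fin 2) from rfl, hv1t, hv1f]
      have he : Real.exp (4*ε - d) = Real.exp (4*ε) * Real.exp (-d) := by
        rw [← Real.exp_add, sub_eq_add_neg]
      have hed : Real.exp (-d) = (1 - μ 1 + μ 1 * Real.exp (4*ε))⁻¹ := by
        rw [hdd, Real.exp_neg, Real.exp_log hdenpos]
      have hkey : Real.exp (4*ε - d) * μ 1 + Real.exp (-d) * (1 - μ 1)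
          = (1 - μ 1 + μ 1 * Real.exp (4*ε)) * (1 - μ 1 + μ 1 * Real.exp (4*ε))⁻¹ := by
        rw [he, hed]
        ring
      rw [hkey, mul_inv_cancel₀ hdenpos.ne']
  -- per-history bound
  have hperh : ∀ h : Fin (t-1) → Fin 2 × Bool,
      (P ({ω | c < M.θ t 1 ω ∧ L ≤ (M.k 1 t ω : ℝ)} ∩ EvP M (t-1) h)).toReal
        ≤ (((T:ℝ))^3)⁻¹ * (P (EvP M (t-1) h)).toReal
          + (((T:ℝ))^3)⁻¹ * ((∏ τ, fwt (h τ)) * (P (EvP M (t-1) h)).toReal) := by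
    intro h
    have hprE : (0:ℝ) ≤ (P (EvP M (t-1) h)).toReal := ENNReal.toReal_nonneg
    have hwtprod : (0:ℝ) ≤ ∏ τ, fwt (h τ) := Finset.prod_nonneg fun τ _ => hfwt0 _
    have hTinv : (0:ℝ) ≤ (((T:ℝ))^3)⁻¹ := inv_nonneg.2 hTT.le
    have hrhs1 : (0:ℝ) ≤ (((T:ℝ))^3)⁻¹ * (P (EvP M (t-1) h)).toReal :=
      mul_nonneg hTinv hprE
    have hrhs2 : (0:ℝ) ≤ (((T:ℝ))^3)⁻¹ * ((∏ τ, fwt (h τ)) * (P (EvP M (t-1) h)).toReal) :=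
      mul_nonneg hTinv (mul_nonneg hwtprod hprE)
    obtain ⟨S1, hS1⟩ : ∃ n : ℕ,
        (Finset.univ.filter fun τ : Fin (t-1) => h τ = (1, true)).card = n := ⟨_, rfl⟩
    obtain ⟨F1, hF1⟩ : ∃ n : ℕ,
        (Finset.univ.filter fun τ : Fin (t-1) => h τ = (1, false)).card = n := ⟨_, rfl⟩
    obtain ⟨K1, hK1⟩ : ∃ n : ℕ,
        (Finset.univ.filter fun τ : Fin (t-1) => (h τ).1 = 1).card = n := ⟨_, rfl⟩
    have hKsp : K1 = S1 + F1 := by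
      rw [← hS1, ← hF1, ← hK1]
      exact K_split _ h
    by_cases hKL : (K1 : ℝ) < L
    · have hempty : {ω | c < M.θ t 1 ω ∧ L ≤ (M.k 1 t ω : ℝ)} ∩ EvP M (t-1) h = ∅ := by
        ext ω
        simp only [Set.mem_inter_iff, Set.mem_setOf_eq, Set.mem_empty_iff_false, iff_false,
          not_and]
        rintro ⟨hθ, hk⟩ hEv
        rw [k_on_EvP M t h hEv, hK1] at hk
        exact absurd hk (not_le.2 hKL)
      rw [hempty]
      simp only [measure_empty, ENNReal.toReal_zero]
      linarith
    · push_neg at hKL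
      by_cases hSC : (S1 : ℝ) ≤ (μ 1 + ε) * (K1 : ℝ)
      · -- bad1 : empirical mean small, beta tail small
        have h1 : (P ({ω | c < M.θ t 1 ω ∧ L ≤ (M.k 1 t ω : ℝ)} ∩ EvP M (t-1) h)).toReal
            ≤ (P ({ω | c < M.θ t 1 ω} ∩ EvP M (t-1) h)).toReal := by
          apply ENNReal.toReal_mono (measure_ne_top P _)
          apply measure_mono
          rintro ω ⟨⟨hθ, _⟩, hEv⟩
          exact ⟨hθ, hEv⟩
        have htail := theta_tail M t c hc0 hc1 h
        rw [hS1, hF1] at htail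
        have hKcast : (K1 : ℝ) = (S1:ℝ) + (F1:ℝ) := by rw [hKsp]; push_cast; ring
        have htb : (∑ j ∈ Finset.range (S1 + 1), binPMF (S1 + F1 + 1) c j)
            ≤ Real.exp (-(2 * ε^2 * ((S1 + F1 + 1 : ℕ) : ℝ))) := by
          apply binom_low_tail (S1 + F1 + 1) S1 c ε hc0 hc1 hεpos.le
          have hce : c - ε = μ 1 + ε := by rw [hcd, hεd]; ring
          have hcast : ((S1 + F1 + 1 : ℕ) : ℝ) = (S1:ℝ) + (F1:ℝ) + 1 := by push_cast; ring
          rw [hcast, hce]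
          rw [hKcast] at hSC
          nlinarith [hμ1, hεpos]
        have hexp2 : Real.exp (-(2 * ε^2 * ((S1 + F1 + 1 : ℕ) : ℝ))) ≤ (((T:ℝ))^3)⁻¹ := by
          rw [← hT3]
          apply Real.exp_le_exp.2
          have hLle : L ≤ ((S1 + F1 + 1 : ℕ) : ℝ) := by
            have hc2 : (K1 : ℝ) ≤ ((S1 + F1 + 1 : ℕ) : ℝ) := by
              rw [hKcast]; push_cast; linarith
            linarith
          have hmul := mul_le_mul_of_nonneg_left hLle
            (show (0:ℝ) ≤ 2 * ε^2 by positivity)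
          linarith [hL3]
        calc (P ({ω | c < M.θ t 1 ω ∧ L ≤ (M.k 1 t ω : ℝ)} ∩ EvP M (t-1) h)).toReal
            ≤ (P ({ω | c < M.θ t 1 ω} ∩ EvP M (t-1) h)).toReal := h1
          _ = (∑ j ∈ Finset.range (S1 + 1), binPMF (S1 + F1 + 1) c j)
              * (P (EvP M (t-1) h)).toReal := htail
          _ ≤ (((T:ℝ))^3)⁻¹ * (P (EvP M (t-1) h)).toReal :=
              mul_le_mul_of_nonneg_right (le_trans htb hexp2) hprE
          _ ≤ _ := le_add_of_nonneg_right hrhs2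
      · -- bad2 : empirical mean large, use the weight
        push_neg at hSC
        have hwt : ((T:ℝ))^3 ≤ ∏ τ, fwt (h τ) := by
          have hwe := weight_exp (t-1) h (4*ε) d
          rw [hS1, hK1] at hwe
          rw [hwe]
          have h3 : 3 * Real.log T ≤ 4*ε * (S1:ℝ) - d * (K1:ℝ) := by
            have hKr0 : (0:ℝ) ≤ (K1:ℝ) := Nat.cast_nonneg _
            have e1 : 4*ε*((μ 1 + ε) * (K1:ℝ)) ≤ 4*ε*(S1:ℝ) :=
              mul_le_mul_of_nonneg_left hSC.le (by positivity)
            have e2 : d * (K1:ℝ) ≤ (4*ε*μ 1 + 2*ε^2) * (K1:ℝ) :=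
              mul_le_mul_of_nonneg_right hd_le hKr0
            have e3 : 2*ε^2*L ≤ 2*ε^2*(K1:ℝ) :=
              mul_le_mul_of_nonneg_left hKL (by positivity)
            have e4 : 4*ε*((μ 1 + ε) * (K1:ℝ)) - (4*ε*μ 1 + 2*ε^2) * (K1:ℝ)
                = 2*ε^2*(K1:ℝ) := by ring
            linarith [hL3]
          calc ((T:ℝ))^3 = Real.exp (3 * Real.log T) := by
                rw [show (3:ℝ) * Real.log T = ((3:ℕ):ℝ) * Real.log T by norm_num,
                  Real.exp_nat_mul, Real.exp_log hTpos]
            _ ≤ _ := Real.exp_le_exp.2 h3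
        have h1 : (P ({ω | c < M.θ t 1 ω ∧ L ≤ (M.k 1 t ω : ℝ)} ∩ EvP M (t-1) h)).toReal
            ≤ (P (EvP M (t-1) h)).toReal :=
          ENNReal.toReal_mono (measure_ne_top P _) (measure_mono Set.inter_subset_right)
        have h15 : 1 ≤ (((T:ℝ))^3)⁻¹ * (∏ τ, fwt (h τ)) := by
          rw [← inv_mul_cancel₀ hTT.ne']
          exact mul_le_mul_of_nonneg_left hwt hTinv
        have h2 : (P (EvP M (t-1) h)).toReal
            ≤ (((T:ℝ))^3)⁻¹ * ((∏ τ, fwt (h τ)) * (P (EvP M (t-1) h)).toReal) := by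
          rw [← mul_assoc]
          nlinarith [hprE, h15]
        calc (P ({ω | c < M.θ t 1 ω ∧ L ≤ (M.k 1 t ω : ℝ)} ∩ EvP M (t-1) h)).toReal
            ≤ (P (EvP M (t-1) h)).toReal := h1
          _ ≤ (((T:ℝ))^3)⁻¹ * ((∏ τ, fwt (h τ)) * (P (EvP M (t-1) h)).toReal) := h2
          _ ≤ _ := le_add_of_nonneg_left hrhs1
  -- sum the per-history bounds
  have hfwtsum := lemA M hμ0 hμ1 hgap fwt hfwt0 hfwtcond (t-1)
  have honesum : ∑ h : Fin (t-1) → Fin 2 × Bool, (P (EvP M (t-1) h)).toReal ≤ 1 := by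
    have := lemA M hμ0 hμ1 hgap (fun _ => 1) (fun _ => zero_le_one)
      (fun i => le_of_eq (by ring)) (t-1)
    simpa using this
  have hPr : (P ({ω | c < M.θ t 1 ω ∧ L ≤ (M.k 1 t ω : ℝ)})).toReal
      ≤ ∑ h : Fin (t-1) → Fin 2 × Bool,
          (P ({ω | c < M.θ t 1 ω ∧ L ≤ (M.k 1 t ω : ℝ)} ∩ EvP M (t-1) h)).toReal := by
    have hsub : {ω | c < M.θ t 1 ω ∧ L ≤ (M.k 1 t ω : ℝ)}
        ⊆ ⋃ h ∈ (Finset.univ : Finset (Fin (t-1) → Fin 2 × Bool)),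
            ({ω | c < M.θ t 1 ω ∧ L ≤ (M.k 1 t ω : ℝ)} ∩ EvP M (t-1) h) := by
      intro ω hω
      exact Set.mem_biUnion
        (Finset.mem_univ (fun τ : Fin (t-1) => (M.play ((τ:ℕ)+1) ω, M.r ((τ:ℕ)+1) ω)))
        ⟨hω, fun τ => rfl⟩
    have hP1 : P {ω | c < M.θ t 1 ω ∧ L ≤ (M.k 1 t ω : ℝ)}
        ≤ ∑ h : Fin (t-1) → Fin 2 × Bool,
            P ({ω | c < M.θ t 1 ω ∧ L ≤ (M.k 1 t ω : ℝ)} ∩ EvP M (t-1) h) :=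
      le_trans (measure_mono hsub) (measure_biUnion_finset_le _ _)
    calc (P ({ω | c < M.θ t 1 ω ∧ L ≤ (M.k 1 t ω : ℝ)})).toReal
        ≤ (∑ h : Fin (t-1) → Fin 2 × Bool,
            P ({ω | c < M.θ t 1 ω ∧ L ≤ (M.k 1 t ω : ℝ)} ∩ EvP M (t-1) h)).toReal :=
          ENNReal.toReal_mono (ENNReal.sum_ne_top.2 fun h _ => measure_ne_top P _) hP1
      _ = _ := ENNReal.toReal_sum fun h _ => measure_ne_top P _
  have hPr2 : (P ({ω | c < M.θ t 1 ω ∧ L ≤ (M.k 1 t ω : ℝ)})).toReal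
      ≤ 2 * (((T:ℝ))^3)⁻¹ := by
    calc (P ({ω | c < M.θ t 1 ω ∧ L ≤ (M.k 1 t ω : ℝ)})).toReal
        ≤ ∑ h : Fin (t-1) → Fin 2 × Bool,
            (P ({ω | c < M.θ t 1 ω ∧ L ≤ (M.k 1 t ω : ℝ)} ∩ EvP M (t-1) h)).toReal := hPr
      _ ≤ ∑ h : Fin (t-1) → Fin 2 × Bool,
            ((((T:ℝ))^3)⁻¹ * (P (EvP M (t-1) h)).toReal
              + (((T:ℝ))^3)⁻¹ * ((∏ τ, fwt (h τ)) * (P (EvP M (t-1) h)).toReal)) :=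
          Finset.sum_le_sum fun h _ => hperh h
      _ = (((T:ℝ))^3)⁻¹ * (∑ h : Fin (t-1) → Fin 2 × Bool, (P (EvP M (t-1) h)).toReal)
          + (((T:ℝ))^3)⁻¹ * (∑ h : Fin (t-1) → Fin 2 × Bool,
              (∏ τ, fwt (h τ)) * (P (EvP M (t-1) h)).toReal) := by
          rw [Finset.sum_add_distrib, Finset.mul_sum, Finset.mul_sum]
      _ ≤ (((T:ℝ))^3)⁻¹ * 1 + (((T:ℝ))^3)⁻¹ * 1 := by
          have hi : (0:ℝ) ≤ (((T:ℝ))^3)⁻¹ := inv_nonneg.2 hTT.le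
          exact add_le_add (mul_le_mul_of_nonneg_left honesum hi)
            (mul_le_mul_of_nonneg_left hfwtsum hi)
      _ = 2 * (((T:ℝ))^3)⁻¹ := by ring
  -- covering
  have h1le : (1:ℝ) ≤ (P {ω | M.θ t 1 ω ≤ c ∨ (M.k 1 t ω : ℝ) < L}).toReal
      + (P ({ω | c < M.θ t 1 ω ∧ L ≤ (M.k 1 t ω : ℝ)})).toReal := by
    have hcover : (Set.univ : Set Ω)
        ⊆ {ω | M.θ t 1 ω ≤ c ∨ (M.k 1 t ω : ℝ) < L}
          ∪ {ω | c < M.θ t 1 ω ∧ L ≤ (M.k 1 t ω : ℝ)} := by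
      intro ω _
      by_cases h1 : M.θ t 1 ω ≤ c
      · exact Or.inl (Or.inl h1)
      · by_cases h2 : (M.k 1 t ω : ℝ) < L
        · exact Or.inl (Or.inr h2)
        · exact Or.inr ⟨not_le.1 h1, not_lt.1 h2⟩
    have hle : (1:ENNReal) ≤ P {ω | M.θ t 1 ω ≤ c ∨ (M.k 1 t ω : ℝ) < L}
        + P ({ω | c < M.θ t 1 ω ∧ L ≤ (M.k 1 t ω : ℝ)}) := by
      rw [← measure_univ (μ := P)]
      exact le_trans (measure_mono hcover) (measure_union_le _ _)
    have htr := ENNReal.toReal_mono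
      (ENNReal.add_ne_top.2 ⟨measure_ne_top P _, measure_ne_top P _⟩) hle
    rw [ENNReal.toReal_one, ENNReal.toReal_add (measure_ne_top P _) (measure_ne_top P _)] at htr
    exact htr
  have hfin : 2 * (((T:ℝ))^3)⁻¹ ≤ 2 / ((T:ℝ))^2 := by
    rw [div_eq_mul_inv]
    have h23 : ((T:ℝ))^2 ≤ ((T:ℝ))^3 := pow_le_pow_right₀ hT1 (by norm_num)
    have hinv := inv_anti₀ (show (0:ℝ) < ((T:ℝ))^2 by positivity) h23
    linarith
  linarith [hPr2, h1le, hfin]
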